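/- If 1/4 < ℓ' ≤ ℓ < 1/2, then there exists a constant C such that for all real a and c, ∫_ℝ dx / ((1+|x-a|)^{2ℓ} (1+|x-c|)^{2ℓ'}) ≤ C / (1+|a-c|)^{2ℓ+2ℓ'-1}. -/

import Mathlib

open MeasureTheory Set Real
open scoped ENNReal

namespace CalcEst6Aux

lemma le6_1 {a b c d e f : ℝ≥0∞} : a ≤ a + b + c + d + e + f := by
  calc a ≤ a + (b + c + d + e + f) := le_self_add
    _ = a + b + c + d + e + f := by ring

lemma le6_2 {a b c d e f : ℝ≥0∞} : b ≤ a + b + c + d + e + f := by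
  calc b ≤ b + (a + c + d + e + f) := le_self_add
    _ = a + b + c + d + e + f := by ring

lemma le6_3 {a b c d e f : ℝ≥0∞} : c ≤ a + b + c + d + e + f := by
  calc c ≤ c + (a + b + d + e + f) := le_self_add
    _ = a + b + c + d + e + f := by ring

lemma le6_4 {a b c d e f : ℝ≥0∞} : d ≤ a + b + c + d + e + f := by
  calc d ≤ d + (a + b + c + e + f) := le_self_add
    _ = a + b + c + d + e + f := by ring

lemma le6_5 {a b c d e f : ℝ≥0∞} : e ≤ a + b + c + d + e + f := by
  calc e ≤ e + (a + b + c + d + f) := le_self_add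
    _ = a + b + c + d + e + f := by ring

lemma le6_6 {a b c d e f : ℝ≥0∞} : f ≤ a + b + c + d + e + f := by
  calc f ≤ f + (a + b + c + d + e) := le_self_add
    _ = a + b + c + d + e + f := by ring

lemma one_div_le_bnd {A B A' B' p q : ℝ} (hA' : 0 < A') (hB' : 0 < B')
    (hA : A' ≤ A) (hB : B' ≤ B) (hp : 0 ≤ p) (hq : 0 ≤ q) :
    1 / (A ^ p * B ^ q) ≤ 1 / (A' ^ p * B' ^ q) := by
  apply one_div_le_one_div_of_le
  · positivity
  · exact mul_le_mul (rpow_le_rpow hA'.le hA hp) (rpow_le_rpow hB'.le hB hq)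
      (rpow_nonneg hB'.le q) (rpow_nonneg (hA'.le.trans hA) p)

lemma oneAdd_Ioi_int (s T : ℝ) (hs : 1 < s) (hT : 0 ≤ T) :
    IntegrableOn (fun x : ℝ => (1 + x) ^ (-s)) (Ioi T) := by
  have h0 : (0:ℝ) < 1 + T := by linarith
  have hs' : -s < -1 := by linarith
  have base := integrableOn_Ioi_rpow_of_lt hs' h0
  have hpre : (fun x : ℝ => x + 1) ⁻¹' Ioi (1 + T) = Ioi T := by
    rw [preimage_add_const_Ioi]; norm_num
  have := ((measurePreserving_add_right volume 1).integrableOn_comp_preimage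
    (Homeomorph.addRight (1:ℝ)).measurableEmbedding).mpr base
  rw [hpre] at this
  exact this.congr_fun (fun x _ => by simp [Function.comp, add_comm]) measurableSet_Ioi

lemma oneAdd_Ioi_val (s T : ℝ) (hs : 1 < s) (hT : 0 ≤ T) :
    ∫ x in Ioi T, (1 + x) ^ (-s) = (1 + T) ^ (1 - s) / (s - 1) := by
  have h0 : (0:ℝ) < 1 + T := by linarith
  have hs' : -s < -1 := by linarith
  have hpre : (fun x : ℝ => x + 1) ⁻¹' Ioi (1 + T) = Ioi T := by
    rw [preimage_add_const_Ioi]; norm_num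
  have key := (measurePreserving_add_right volume 1).setIntegral_preimage_emb
    (Homeomorph.addRight (1:ℝ)).measurableEmbedding (fun y => y ^ (-s)) (Ioi (1 + T))
  rw [hpre] at key
  have e1 : ∫ x in Ioi T, (1 + x) ^ (-s) = ∫ y in Ioi (1 + T), y ^ (-s) := by
    rw [← key]
    exact setIntegral_congr_fun measurableSet_Ioi fun x _ => by rw [add_comm]
  rw [e1, integral_Ioi_rpow_of_lt hs' h0]
  rw [show -s + 1 = 1 - s by ring, show (1:ℝ) - s = -(s-1) by ring]
  rw [div_neg, neg_div, neg_neg]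

lemma rpow_int_bound (r L M : ℝ) (hr1 : r < 1) (hL : 0 ≤ L) (hLM : L ≤ M) :
    ∫ y in (1:ℝ)..(1+L), y ^ (-r) ≤ (1 + M) ^ (1 - r) / (1 - r) := by
  rw [integral_rpow (Or.inl (by linarith : (-1:ℝ) < -r))]
  rw [one_rpow, show -r + 1 = 1 - r by ring]
  have h1 : (1 + L) ^ (1 - r) ≤ (1 + M) ^ (1 - r) :=
    rpow_le_rpow (by linarith) (by linarith) (by linarith)
  have h2 : (0:ℝ) < 1 - r := by linarith
  rw [div_le_div_iff₀ h2 h2]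
  nlinarith [rpow_nonneg (show (0:ℝ) ≤ 1 + L by linarith) (1 - r)]

lemma intOn_rpow {u : ℝ → ℝ} {a b r : ℝ} (hu : ContinuousOn u (Icc a b))
    (hpos : ∀ x ∈ Icc a b, 0 < u x) :
    IntegrableOn (fun x => u x ^ (-r)) (Ioc a b) :=
  ((hu.rpow_const (fun x hx => Or.inl (ne_of_gt (hpos x hx)))).integrableOn_Icc).mono_set
    Ioc_subset_Icc_self

lemma region {S : Set ℝ} (hS : MeasurableSet S) {g : ℝ → ℝ} {b : ℝ}
    (hgi : IntegrableOn g S) (hg0 : ∀ x ∈ S, 0 ≤ g x) (hb : ∫ x in S, g x ≤ b) :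
    ∫⁻ x in S, ENNReal.ofReal (g x) ≤ ENNReal.ofReal b := by
  rw [← ofReal_integral_eq_lintegral_ofReal hgi
    ((ae_restrict_iff' hS).mpr (Filter.Eventually.of_forall hg0))]
  exact ENNReal.ofReal_le_ofReal hb

lemma key (p q : ℝ) (hq2 : 1/2 < q) (hqp : q ≤ p) (hp1 : p < 1) (d : ℝ) (hd : 0 ≤ d) :
    ∫ x : ℝ, 1 / ((1 + |x|) ^ p * (1 + |x - d|) ^ q) ≤
      (1/(p+q-1) + 1/(1-p) + 2^q/(1-p) + 2^p/(1-q) + 1/(1-q) + 2^q/(p+q-1))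
        * (1 + d) ^ (-(p+q-1)) := by
  have hq1 : q < 1 := lt_of_le_of_lt hqp hp1
  have hq0 : 0 < q := lt_trans (by norm_num) hq2
  have hp0 : 0 < p := lt_of_lt_of_le hq0 hqp
  have ht : 0 < p + q - 1 := by linarith
  have h1p : (0:ℝ) < 1 - p := by linarith
  have h1q : (0:ℝ) < 1 - q := by linarith
  have hd1 : (0:ℝ) < 1 + d := by linarith
  set f : ℝ → ℝ := fun x => 1 / ((1 + |x|) ^ p * (1 + |x - d|) ^ q) with hf
  have hfpos : ∀ x, 0 ≤ f x := fun x => by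
    have h1 : (0:ℝ) < 1 + |x| := by positivity
    have h2 : (0:ℝ) < 1 + |x - d| := by positivity
    positivity
  have hfc : Continuous f := by
    apply continuous_const.div
    · apply Continuous.mul
      · exact (continuous_const.add continuous_abs).rpow_const
          (fun x => Or.inl (ne_of_gt (by have : (0:ℝ) < 1 + |x| := by positivity
                                         exact this)))
      · exact (continuous_const.add ((continuous_id.sub continuous_const).abs)).rpow_const
          (fun x => Or.inl (ne_of_gt (by have : (0:ℝ) < 1 + |x - d| := by positivity
                                         exact this)))
    · intro x
      have h1 : (0:ℝ) < 1 + |x| := by positivity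
      have h2 : (0:ℝ) < 1 + |x - d| := by positivity
      positivity
  -- the six comparison functions
  set g1 : ℝ → ℝ := fun x => (1 + -x) ^ (-(p+q)) with hg1
  set g2 : ℝ → ℝ := fun x => (1+d)^(-q) * (1 - x) ^ (-p) with hg2
  set g3 : ℝ → ℝ := fun x => 2^q * (1+d)^(-q) * (1 + x) ^ (-p) with hg3
  set g4 : ℝ → ℝ := fun x => 2^p * (1+d)^(-p) * ((1+d) - x) ^ (-q) with hg4
  set g5 : ℝ → ℝ := fun x => (1+d)^(-p) * (x - (d-1)) ^ (-q) with hg5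
  set g6 : ℝ → ℝ := fun x => 2^q * (1 + x) ^ (-(p+q)) with hg6
  set E : ℝ := (1 + d) ^ (-(p+q-1)) with hE
  have hE0 : 0 ≤ E := rpow_nonneg hd1.le _
  -- pointwise bounds
  have hb1 : ∀ x, x ≤ -d → f x ≤ g1 x := by
    intro x hx
    have hx0 : x ≤ 0 := by linarith
    have hpos : (0:ℝ) < 1 + -x := by linarith
    have e1 : 1 + |x| = 1 + -x := by rw [abs_of_nonpos hx0]
    have e2 : 1 + |x - d| = 1 + (d - x) := by rw [abs_of_nonpos (by linarith), neg_sub]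
    have step : f x ≤ 1 / ((1 + -x) ^ p * (1 + -x) ^ q) := by
      simp only [hf]; rw [e1, e2]
      exact one_div_le_bnd hpos hpos le_rfl (by linarith) hp0.le hq0.le
    calc f x ≤ 1 / ((1 + -x) ^ p * (1 + -x) ^ q) := step
      _ = g1 x := by
          simp only [hg1]
          rw [rpow_neg hpos.le, rpow_add hpos, one_div]
  have hb2 : ∀ x, -d < x → x ≤ 0 → f x ≤ g2 x := by
    intro x hx hx0
    have hpos : (0:ℝ) < 1 - x := by linarith
    have e1 : 1 + |x| = 1 - x := by rw [abs_of_nonpos hx0]; ring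
    have e2 : 1 + |x - d| = 1 + (d - x) := by rw [abs_of_nonpos (by linarith), neg_sub]
    have step : f x ≤ 1 / ((1 - x) ^ p * (1 + d) ^ q) := by
      simp only [hf]; rw [e1, e2]
      exact one_div_le_bnd hpos hd1 le_rfl (by linarith) hp0.le hq0.le
    calc f x ≤ 1 / ((1 - x) ^ p * (1 + d) ^ q) := step
      _ = g2 x := by
          simp only [hg2]
          rw [rpow_neg hd1.le, rpow_neg hpos.le, one_div, mul_inv, mul_comm]
  have hb3 : ∀ x, 0 < x → x ≤ d/2 → f x ≤ g3 x := by
    intro x hx hx2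
    have hxd : x ≤ d := by linarith
    have hpos : (0:ℝ) < 1 + x := by linarith
    have hB : (0:ℝ) < (1+d)/2 := by linarith
    have e1 : 1 + |x| = 1 + x := by rw [abs_of_nonneg hx.le]
    have e2 : 1 + |x - d| = 1 + (d - x) := by rw [abs_of_nonpos (by linarith), neg_sub]
    have step : f x ≤ 1 / ((1 + x) ^ p * ((1+d)/2) ^ q) := by
      simp only [hf]; rw [e1, e2]
      exact one_div_le_bnd hpos hB le_rfl (by linarith) hp0.le hq0.le
    calc f x ≤ 1 / ((1 + x) ^ p * ((1+d)/2) ^ q) := step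
      _ = g3 x := by
          simp only [hg3]
          rw [div_rpow hd1.le (by norm_num : (0:ℝ) ≤ 2), rpow_neg hd1.le, rpow_neg hpos.le]
          have n1 : (2:ℝ)^q ≠ 0 := by positivity
          have n2 : ((1:ℝ)+d)^q ≠ 0 := by positivity
          have n3 : ((1:ℝ)+x)^p ≠ 0 := by positivity
          field_simp
          try ring
  have hb4 : ∀ x, d/2 < x → x ≤ d → f x ≤ g4 x := by
    intro x hx hx2
    have hx0 : 0 ≤ x := by linarith
    have hpos : (0:ℝ) < (1+d) - x := by linarith
    have hA : (0:ℝ) < (1+d)/2 := by linarith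
    have e1 : 1 + |x| = 1 + x := by rw [abs_of_nonneg hx0]
    have e2 : 1 + |x - d| = (1+d) - x := by rw [abs_of_nonpos (by linarith), neg_sub]; ring
    have step : f x ≤ 1 / (((1+d)/2) ^ p * ((1+d) - x) ^ q) := by
      simp only [hf]; rw [e1, e2]
      exact one_div_le_bnd hA hpos (by linarith) le_rfl hp0.le hq0.le
    calc f x ≤ 1 / (((1+d)/2) ^ p * ((1+d) - x) ^ q) := step
      _ = g4 x := by
          simp only [hg4]
          rw [div_rpow hd1.le (by norm_num : (0:ℝ) ≤ 2), rpow_neg hd1.le, rpow_neg hpos.le]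
          have n1 : (2:ℝ)^p ≠ 0 := by positivity
          have n2 : ((1:ℝ)+d)^p ≠ 0 := by positivity
          have n3 : ((1:ℝ)+d-x)^q ≠ 0 := by positivity
          field_simp
          try ring
  have hb5 : ∀ x, d < x → x ≤ 2*d → f x ≤ g5 x := by
    intro x hx hx2
    have hx0 : 0 ≤ x := by linarith
    have hpos : (0:ℝ) < x - (d-1) := by linarith
    have e1 : 1 + |x| = 1 + x := by rw [abs_of_nonneg hx0]
    have e2 : 1 + |x - d| = x - (d-1) := by rw [abs_of_nonneg (by linarith)]; ring
    have step : f x ≤ 1 / ((1+d) ^ p * (x - (d-1)) ^ q) := by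
      simp only [hf]; rw [e1, e2]
      exact one_div_le_bnd hd1 hpos (by linarith) le_rfl hp0.le hq0.le
    calc f x ≤ 1 / ((1+d) ^ p * (x - (d-1)) ^ q) := step
      _ = g5 x := by
          simp only [hg5]
          rw [rpow_neg hd1.le, rpow_neg hpos.le, one_div, mul_inv]
  have hb6 : ∀ x, 2*d < x → f x ≤ g6 x := by
    intro x hx
    have hx0 : 0 ≤ x := by linarith
    have hpos : (0:ℝ) < 1 + x := by linarith
    have hB : (0:ℝ) < (1+x)/2 := by linarith
    have e1 : 1 + |x| = 1 + x := by rw [abs_of_nonneg hx0]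
    have e2 : 1 + |x - d| = 1 + (x - d) := by rw [abs_of_nonneg (by linarith)]
    have step : f x ≤ 1 / ((1 + x) ^ p * ((1+x)/2) ^ q) := by
      simp only [hf]; rw [e1, e2]
      exact one_div_le_bnd hpos hB le_rfl (by linarith) hp0.le hq0.le
    calc f x ≤ 1 / ((1 + x) ^ p * ((1+x)/2) ^ q) := step
      _ = g6 x := by
          simp only [hg6]
          rw [div_rpow hpos.le (by norm_num : (0:ℝ) ≤ 2), rpow_neg hpos.le,
            rpow_add hpos]
          have n1 : (2:ℝ)^q ≠ 0 := by positivity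
          have n2 : ((1:ℝ)+x)^q ≠ 0 := by positivity
          have n3 : ((1:ℝ)+x)^p ≠ 0 := by positivity
          field_simp
          try ring
  -- integral bounds per region
  have R1 : ∫⁻ x in Iic (-d), ENNReal.ofReal (g1 x) ≤ ENNReal.ofReal ((1/(p+q-1)) * E) := by
    apply region measurableSet_Iic
    · have base := oneAdd_Ioi_int (p+q) d (by linarith) hd
      have mp : MeasurePreserving (fun x : ℝ => -x) volume volume :=
        Measure.measurePreserving_neg volume
      have emb : MeasurableEmbedding (fun x : ℝ => -x) :=
        (Homeomorph.neg ℝ).measurableEmbedding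
      have h2 := (mp.integrableOn_comp_preimage emb).mpr base
      have hpre : (fun x : ℝ => -x) ⁻¹' Ioi d = Iio (-d) := by
        ext x; simp [lt_neg]
      rw [hpre] at h2
      have h3 : IntegrableOn g1 (Iio (-d)) :=
        h2.congr_fun (fun x _ => by simp [hg1, Function.comp]) measurableSet_Iio
      exact Iff.mpr integrableOn_Iic_iff_integrableOn_Iio h3
    · intro x hx
      have hx' : x ≤ -d := hx
      exact rpow_nonneg (by linarith : (0:ℝ) ≤ 1 + -x) _
    · have comp := integral_comp_neg_Iic (-d) (fun y : ℝ => (1 + y) ^ (-(p+q)))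
      simp only [neg_neg] at comp
      simp only [hg1]
      rw [comp]
      rw [oneAdd_Ioi_val (p+q) d (by linarith) hd]
      rw [show (1:ℝ)-(p+q) = -(p+q-1) by ring]
      simp only [hE]
      apply le_of_eq
      ring
  have R2 : ∫⁻ x in Ioc (-d) 0, ENNReal.ofReal (g2 x) ≤ ENNReal.ofReal ((1/(1-p)) * E) := by
    apply region measurableSet_Ioc
    · simp only [hg2]
      apply Integrable.const_mul
      apply intOn_rpow (u := fun x : ℝ => 1 - x)
        ((continuous_const.sub continuous_id).continuousOn)
      intro x hx
      simp only [mem_Icc] at hx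
      show (0:ℝ) < 1 - x
      linarith [hx.1, hx.2]
    · intro x hx
      rcases hx with ⟨hx1, hx2⟩
      simp only [hg2]
      have hpos : (0:ℝ) < 1 - x := by linarith
      positivity
    · simp only [hg2]
      rw [← intervalIntegral.integral_of_le (by linarith : -d ≤ (0:ℝ))]
      rw [intervalIntegral.integral_const_mul]
      have comp := intervalIntegral.integral_comp_sub_left (a := -d) (b := 0)
        (fun y : ℝ => y ^ (-p)) 1
      simp only [sub_zero, sub_neg_eq_add] at comp
      rw [comp]
      have hval := rpow_int_bound p d d hp1 hd le_rfl
      calc (1+d)^(-q) * ∫ y in (1:ℝ)..(1+d), y ^ (-p)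
          ≤ (1+d)^(-q) * ((1+d)^(1-p)/(1-p)) :=
            mul_le_mul_of_nonneg_left hval (rpow_nonneg hd1.le _)
        _ = (1/(1-p)) * E := by
            simp only [hE]
            rw [show -(p+q-1) = -q + (1-p) by ring, rpow_add hd1]
            ring
  have R3 : ∫⁻ x in Ioc 0 (d/2), ENNReal.ofReal (g3 x) ≤ ENNReal.ofReal ((2^q/(1-p)) * E) := by
    apply region measurableSet_Ioc
    · simp only [hg3]
      apply Integrable.const_mul
      apply intOn_rpow (u := fun x : ℝ => 1 + x)
        ((continuous_const.add continuous_id).continuousOn)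
      intro x hx
      simp only [mem_Icc] at hx
      show (0:ℝ) < 1 + x
      linarith [hx.1, hx.2]
    · intro x hx
      rcases hx with ⟨hx1, hx2⟩
      simp only [hg3]
      have hpos : (0:ℝ) < 1 + x := by linarith
      positivity
    · simp only [hg3]
      rw [← intervalIntegral.integral_of_le (by linarith : (0:ℝ) ≤ d/2)]
      rw [intervalIntegral.integral_const_mul]
      have comp := intervalIntegral.integral_comp_add_left (a := 0) (b := d/2)
        (fun y : ℝ => y ^ (-p)) 1
      simp only [add_zero] at comp
      rw [comp]
      have hval := rpow_int_bound p (d/2) d hp1 (by linarith) (by linarith)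
      calc 2^q * (1+d)^(-q) * ∫ y in (1:ℝ)..(1+d/2), y ^ (-p)
          ≤ 2^q * (1+d)^(-q) * ((1+d)^(1-p)/(1-p)) := by
            apply mul_le_mul_of_nonneg_left hval
            positivity
        _ = (2^q/(1-p)) * E := by
            simp only [hE]
            rw [show -(p+q-1) = -q + (1-p) by ring, rpow_add hd1]
            ring
  have R4 : ∫⁻ x in Ioc (d/2) d, ENNReal.ofReal (g4 x) ≤ ENNReal.ofReal ((2^p/(1-q)) * E) := by
    apply region measurableSet_Ioc
    · simp only [hg4]
      apply Integrable.const_mul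
      apply intOn_rpow (u := fun x : ℝ => (1+d) - x)
        ((continuous_const.sub continuous_id).continuousOn)
      intro x hx
      simp only [mem_Icc] at hx
      show (0:ℝ) < (1+d) - x
      linarith [hx.1, hx.2]
    · intro x hx
      rcases hx with ⟨hx1, hx2⟩
      simp only [hg4]
      have hpos : (0:ℝ) < (1+d) - x := by linarith
      positivity
    · simp only [hg4]
      rw [← intervalIntegral.integral_of_le (by linarith : d/2 ≤ d)]
      rw [intervalIntegral.integral_const_mul]
      have comp := intervalIntegral.integral_comp_sub_left (a := d/2) (b := d)
        (fun y : ℝ => y ^ (-q)) (1+d)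
      simp only [show (1+d) - d = (1:ℝ) from by ring, show (1+d) - d/2 = 1 + d/2 from by ring]
        at comp
      rw [comp]
      have hval := rpow_int_bound q (d/2) d hq1 (by linarith) (by linarith)
      calc 2^p * (1+d)^(-p) * ∫ y in (1:ℝ)..(1+d/2), y ^ (-q)
          ≤ 2^p * (1+d)^(-p) * ((1+d)^(1-q)/(1-q)) := by
            apply mul_le_mul_of_nonneg_left hval
            positivity
        _ = (2^p/(1-q)) * E := by
            simp only [hE]
            rw [show -(p+q-1) = -p + (1-q) by ring, rpow_add hd1]
            ring
  have R5 : ∫⁻ x in Ioc d (2*d), ENNReal.ofReal (g5 x) ≤ ENNReal.ofReal ((1/(1-q)) * E) := by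
    apply region measurableSet_Ioc
    · simp only [hg5]
      apply Integrable.const_mul
      apply intOn_rpow (u := fun x : ℝ => x - (d-1))
        ((continuous_id.sub continuous_const).continuousOn)
      intro x hx
      simp only [mem_Icc] at hx
      show (0:ℝ) < x - (d-1)
      linarith [hx.1, hx.2]
    · intro x hx
      rcases hx with ⟨hx1, hx2⟩
      simp only [hg5]
      have hpos : (0:ℝ) < x - (d-1) := by linarith
      positivity
    · simp only [hg5]
      rw [← intervalIntegral.integral_of_le (by linarith : d ≤ 2*d)]
      rw [intervalIntegral.integral_const_mul]
      have comp := intervalIntegral.integral_comp_sub_right (a := d) (b := 2*d)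
        (fun y : ℝ => y ^ (-q)) (d-1)
      simp only [show d - (d-1) = (1:ℝ) from by ring, show 2*d - (d-1) = 1 + d from by ring]
        at comp
      rw [comp]
      have hval := rpow_int_bound q d d hq1 hd le_rfl
      calc (1+d)^(-p) * ∫ y in (1:ℝ)..(1+d), y ^ (-q)
          ≤ (1+d)^(-p) * ((1+d)^(1-q)/(1-q)) :=
            mul_le_mul_of_nonneg_left hval (rpow_nonneg hd1.le _)
        _ = (1/(1-q)) * E := by
            simp only [hE]
            rw [show -(p+q-1) = -p + (1-q) by ring, rpow_add hd1]
            ring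
  have R6 : ∫⁻ x in Ioi (2*d), ENNReal.ofReal (g6 x) ≤ ENNReal.ofReal ((2^q/(p+q-1)) * E) := by
    apply region measurableSet_Ioi
    · simp only [hg6]
      exact (oneAdd_Ioi_int (p+q) (2*d) (by linarith) (by linarith)).const_mul _
    · intro x hx
      simp only [mem_Ioi] at hx
      simp only [hg6]
      have hpos : (0:ℝ) < 1 + x := by linarith
      positivity
    · simp only [hg6]
      rw [integral_const_mul]
      rw [oneAdd_Ioi_val (p+q) (2*d) (by linarith) (by linarith)]
      have hmono : (1+2*d) ^ ((1:ℝ)-(p+q)) ≤ (1+d) ^ ((1:ℝ)-(p+q)) :=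
        rpow_le_rpow_of_nonpos hd1 (by linarith) (by linarith)
      calc 2^q * ((1+2*d)^((1:ℝ)-(p+q))/(p+q-1))
          ≤ 2^q * ((1+d)^((1:ℝ)-(p+q))/(p+q-1)) := by
            apply mul_le_mul_of_nonneg_left _ (by positivity : (0:ℝ) ≤ 2^q)
            exact (div_le_div_iff_of_pos_right ht).mpr hmono
        _ = (2^q/(p+q-1)) * E := by
            simp only [hE]
            rw [show (1:ℝ)-(p+q) = -(p+q-1) by ring]
            ring
  -- indicator functions
  set I1 : ℝ → ℝ≥0∞ := (Iic (-d)).indicator (fun x => ENNReal.ofReal (g1 x)) with hI1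
  set I2 : ℝ → ℝ≥0∞ := (Ioc (-d) 0).indicator (fun x => ENNReal.ofReal (g2 x)) with hI2
  set I3 : ℝ → ℝ≥0∞ := (Ioc 0 (d/2)).indicator (fun x => ENNReal.ofReal (g3 x)) with hI3
  set I4 : ℝ → ℝ≥0∞ := (Ioc (d/2) d).indicator (fun x => ENNReal.ofReal (g4 x)) with hI4
  set I5 : ℝ → ℝ≥0∞ := (Ioc d (2*d)).indicator (fun x => ENNReal.ofReal (g5 x)) with hI5
  set I6 : ℝ → ℝ≥0∞ := (Ioi (2*d)).indicator (fun x => ENNReal.ofReal (g6 x)) with hI6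
  have hcover : ∀ x : ℝ, ENNReal.ofReal (f x) ≤ I1 x + I2 x + I3 x + I4 x + I5 x + I6 x := by
    intro x
    rcases le_or_gt x (-d) with h1 | h1
    · calc ENNReal.ofReal (f x) ≤ ENNReal.ofReal (g1 x) := ENNReal.ofReal_le_ofReal (hb1 x h1)
        _ = I1 x := by
              have hmem : x ∈ Iic (-d) := h1
              simp only [hI1]
              exact (indicator_of_mem hmem (fun y => ENNReal.ofReal (g1 y))).symm
        _ ≤ _ := le6_1
    · rcases le_or_gt x 0 with h2 | h2
      · calc ENNReal.ofReal (f x) ≤ ENNReal.ofReal (g2 x) :=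
              ENNReal.ofReal_le_ofReal (hb2 x h1 h2)
          _ = I2 x := by
                have hmem : x ∈ Ioc (-d) 0 := ⟨h1, h2⟩
                simp only [hI2]
                exact (indicator_of_mem hmem (fun y => ENNReal.ofReal (g2 y))).symm
          _ ≤ _ := le6_2
      · rcases le_or_gt x (d/2) with h3 | h3
        · calc ENNReal.ofReal (f x) ≤ ENNReal.ofReal (g3 x) :=
                ENNReal.ofReal_le_ofReal (hb3 x h2 h3)
            _ = I3 x := by
                  have hmem : x ∈ Ioc 0 (d/2) := ⟨h2, h3⟩
                  simp only [hI3]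
                  exact (indicator_of_mem hmem (fun y => ENNReal.ofReal (g3 y))).symm
            _ ≤ _ := le6_3
        · rcases le_or_gt x d with h4 | h4
          · calc ENNReal.ofReal (f x) ≤ ENNReal.ofReal (g4 x) :=
                  ENNReal.ofReal_le_ofReal (hb4 x h3 h4)
              _ = I4 x := by
                    have hmem : x ∈ Ioc (d/2) d := ⟨h3, h4⟩
                    simp only [hI4]
                    exact (indicator_of_mem hmem (fun y => ENNReal.ofReal (g4 y))).symm
              _ ≤ _ := le6_4
          · rcases le_or_gt x (2*d) with h5 | h5
            · calc ENNReal.ofReal (f x) ≤ ENNReal.ofReal (g5 x) :=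
                    ENNReal.ofReal_le_ofReal (hb5 x h4 h5)
                _ = I5 x := by
                      have hmem : x ∈ Ioc d (2*d) := ⟨h4, h5⟩
                      simp only [hI5]
                      exact (indicator_of_mem hmem (fun y => ENNReal.ofReal (g5 y))).symm
                _ ≤ _ := le6_5
            · calc ENNReal.ofReal (f x) ≤ ENNReal.ofReal (g6 x) :=
                    ENNReal.ofReal_le_ofReal (hb6 x h5)
                _ = I6 x := by
                      have hmem : x ∈ Ioi (2*d) := h5
                      simp only [hI6]
                      exact (indicator_of_mem hmem (fun y => ENNReal.ofReal (g6 y))).symm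
                _ ≤ _ := le6_6
  have m1 : Measurable I1 := by
    apply Measurable.indicator _ measurableSet_Iic
    apply Measurable.ennreal_ofReal; simp only [hg1]; fun_prop
  have m2 : Measurable I2 := by
    apply Measurable.indicator _ measurableSet_Ioc
    apply Measurable.ennreal_ofReal; simp only [hg2]; fun_prop
  have m3 : Measurable I3 := by
    apply Measurable.indicator _ measurableSet_Ioc
    apply Measurable.ennreal_ofReal; simp only [hg3]; fun_prop
  have m4 : Measurable I4 := by
    apply Measurable.indicator _ measurableSet_Ioc
    apply Measurable.ennreal_ofReal; simp only [hg4]; fun_prop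
  have m5 : Measurable I5 := by
    apply Measurable.indicator _ measurableSet_Ioc
    apply Measurable.ennreal_ofReal; simp only [hg5]; fun_prop
  have m6 : Measurable I6 := by
    apply Measurable.indicator _ measurableSet_Ioi
    apply Measurable.ennreal_ofReal; simp only [hg6]; fun_prop
  set K : ℝ := 1/(p+q-1) + 1/(1-p) + 2^q/(1-p) + 2^p/(1-q) + 1/(1-q) + 2^q/(p+q-1) with hK
  have hA1 : (0:ℝ) ≤ 1/(p+q-1) * E := mul_nonneg (div_nonneg zero_le_one ht.le) hE0
  have hA2 : (0:ℝ) ≤ 1/(1-p) * E := mul_nonneg (div_nonneg zero_le_one h1p.le) hE0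
  have hA3 : (0:ℝ) ≤ 2^q/(1-p) * E := mul_nonneg (div_nonneg (by positivity) h1p.le) hE0
  have hA4 : (0:ℝ) ≤ 2^p/(1-q) * E := mul_nonneg (div_nonneg (by positivity) h1q.le) hE0
  have hA5 : (0:ℝ) ≤ 1/(1-q) * E := mul_nonneg (div_nonneg zero_le_one h1q.le) hE0
  have hA6 : (0:ℝ) ≤ 2^q/(p+q-1) * E := mul_nonneg (div_nonneg (by positivity) ht.le) hE0
  have hKE : (0:ℝ) ≤ K * E := by
    have h := add_nonneg (add_nonneg (add_nonneg (add_nonneg (add_nonneg hA1 hA2) hA3) hA4)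
      hA5) hA6
    have e : 1/(p+q-1)*E + 1/(1-p)*E + 2^q/(1-p)*E + 2^p/(1-q)*E + 1/(1-q)*E
        + 2^q/(p+q-1)*E = K*E := by
      simp only [hK]; ring
    exact e ▸ h
  have hJ : (∫⁻ x, ENNReal.ofReal (f x)) ≤ ENNReal.ofReal (K * E) := by
    calc ∫⁻ x, ENNReal.ofReal (f x)
        ≤ ∫⁻ x, (I1 x + I2 x + I3 x + I4 x + I5 x + I6 x) := lintegral_mono fun x => hcover x
      _ = (∫⁻ x, I1 x) + (∫⁻ x, I2 x) + (∫⁻ x, I3 x) + (∫⁻ x, I4 x) + (∫⁻ x, I5 x)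
            + (∫⁻ x, I6 x) := by
          rw [lintegral_add_left (f := fun x => I1 x + I2 x + I3 x + I4 x + I5 x) ((((m1.add m2).add m3).add m4).add m5),
            lintegral_add_left (f := fun x => I1 x + I2 x + I3 x + I4 x) (((m1.add m2).add m3).add m4),
            lintegral_add_left (f := fun x => I1 x + I2 x + I3 x) ((m1.add m2).add m3),
            lintegral_add_left (f := fun x => I1 x + I2 x) (m1.add m2),
            lintegral_add_left m1]
      _ = (∫⁻ x in Iic (-d), ENNReal.ofReal (g1 x))
            + (∫⁻ x in Ioc (-d) 0, ENNReal.ofReal (g2 x))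
            + (∫⁻ x in Ioc 0 (d/2), ENNReal.ofReal (g3 x))
            + (∫⁻ x in Ioc (d/2) d, ENNReal.ofReal (g4 x))
            + (∫⁻ x in Ioc d (2*d), ENNReal.ofReal (g5 x))
            + (∫⁻ x in Ioi (2*d), ENNReal.ofReal (g6 x)) := by
          simp only [hI1, hI2, hI3, hI4, hI5, hI6]
          rw [lintegral_indicator measurableSet_Iic, lintegral_indicator measurableSet_Ioc,
            lintegral_indicator measurableSet_Ioc, lintegral_indicator measurableSet_Ioc,
            lintegral_indicator measurableSet_Ioc, lintegral_indicator measurableSet_Ioi]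
      _ ≤ ENNReal.ofReal ((1/(p+q-1)) * E) + ENNReal.ofReal ((1/(1-p)) * E)
            + ENNReal.ofReal ((2^q/(1-p)) * E) + ENNReal.ofReal ((2^p/(1-q)) * E)
            + ENNReal.ofReal ((1/(1-q)) * E) + ENNReal.ofReal ((2^q/(p+q-1)) * E) :=
          add_le_add (add_le_add (add_le_add (add_le_add (add_le_add R1 R2) R3) R4) R5) R6
      _ = ENNReal.ofReal (K * E) := by
          rw [← ENNReal.ofReal_add hA1 hA2,
            ← ENNReal.ofReal_add (add_nonneg hA1 hA2) hA3,
            ← ENNReal.ofReal_add (add_nonneg (add_nonneg hA1 hA2) hA3) hA4,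
            ← ENNReal.ofReal_add (add_nonneg (add_nonneg (add_nonneg hA1 hA2) hA3) hA4) hA5,
            ← ENNReal.ofReal_add (add_nonneg (add_nonneg (add_nonneg (add_nonneg hA1 hA2) hA3)
              hA4) hA5) hA6]
          congr 1
          simp only [hK]
          ring
  rw [integral_eq_lintegral_of_nonneg_ae (Filter.Eventually.of_forall hfpos)
    hfc.aestronglyMeasurable]
  calc (∫⁻ x, ENNReal.ofReal (f x)).toReal
      ≤ (ENNReal.ofReal (K * E)).toReal := ENNReal.toReal_mono ENNReal.ofReal_ne_top hJ
    _ = K * E := ENNReal.toReal_ofReal hKE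

end CalcEst6Aux

open CalcEst6Aux in
theorem calc_est_6 (l l' : ℝ) (h1 : 1/4 < l') (h2 : l' ≤ l) (h3 : l < 1/2) :
    ∃ C : ℝ, ∀ a c : ℝ,
      (∫ x : ℝ, 1 / ((1 + |x - a|) ^ (2*l) * (1 + |x - c|) ^ (2*l'))) ≤
        C / (1 + |a - c|) ^ (2*l + 2*l' - 1) := by
  set p := 2*l with hp
  set q := 2*l' with hq
  have hq2 : 1/2 < q := by rw [hq]; linarith
  have hqp : q ≤ p := by rw [hq, hp]; linarith
  have hp1 : p < 1 := by rw [hp]; linarith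
  set K : ℝ := 1/(p+q-1) + 1/(1-p) + 2^q/(1-p) + 2^p/(1-q) + 1/(1-q) + 2^q/(p+q-1) with hK
  refine ⟨K, fun a c => ?_⟩
  set d : ℝ := c - a with hd
  have hmain : ∀ e : ℝ, 0 ≤ e →
      (∫ x : ℝ, 1 / ((1 + |x|) ^ p * (1 + |x - e|) ^ q)) ≤ K / (1 + e) ^ (p + q - 1) := by
    intro e he
    have hkey := key p q hq2 hqp hp1 e he
    calc (∫ x : ℝ, 1 / ((1 + |x|) ^ p * (1 + |x - e|) ^ q))
        ≤ K * (1 + e) ^ (-(p+q-1)) := hkey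
      _ = K / (1 + e) ^ (p + q - 1) := by
          rw [rpow_neg (by linarith : (0:ℝ) ≤ 1 + e), div_eq_mul_inv]
  have htrans : (∫ x : ℝ, 1 / ((1 + |x - a|) ^ p * (1 + |x - c|) ^ q)) =
      ∫ x : ℝ, 1 / ((1 + |x|) ^ p * (1 + |x - d|) ^ q) := by
    calc (∫ x : ℝ, 1 / ((1 + |x - a|) ^ p * (1 + |x - c|) ^ q))
        = ∫ x : ℝ, 1 / ((1 + |x + a - a|) ^ p * (1 + |x + a - c|) ^ q) :=
          (integral_add_right_eq_self (μ := volume)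
            (fun y : ℝ => 1 / ((1 + |y - a|) ^ p * (1 + |y - c|) ^ q)) a).symm
      _ = ∫ x : ℝ, 1 / ((1 + |x|) ^ p * (1 + |x - d|) ^ q) := by
          congr 1
          funext x
          rw [show x + a - a = x by ring, show x + a - c = x - d by rw [hd]; ring]
  have habsd : |a - c| = |d| := by rw [hd, abs_sub_comm]
  rw [htrans, habsd]
  rcases le_or_gt 0 d with hd0 | hd0
  · rw [abs_of_nonneg hd0]
    exact hmain d hd0
  · rw [abs_of_neg hd0]
    have hrefl : (∫ x : ℝ, 1 / ((1 + |x|) ^ p * (1 + |x - d|) ^ q)) =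
        ∫ x : ℝ, 1 / ((1 + |x|) ^ p * (1 + |x - (-d)|) ^ q) := by
      calc (∫ x : ℝ, 1 / ((1 + |x|) ^ p * (1 + |x - d|) ^ q))
          = ∫ x : ℝ, 1 / ((1 + |(-x)|) ^ p * (1 + |(-x) - d|) ^ q) :=
            (integral_neg_eq_self
              (fun y : ℝ => 1 / ((1 + |y|) ^ p * (1 + |y - d|) ^ q)) volume).symm
        _ = ∫ x : ℝ, 1 / ((1 + |x|) ^ p * (1 + |x - (-d)|) ^ q) := by
            congr 1
            funext x
            rw [abs_neg, show -x - d = -(x - -d) by ring, abs_neg]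
    rw [hrefl]
    exact hmain (-d) (by linarith)
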